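/- Let ρ > 4μ² > 0 and set t_∓ = (ρ ∓ √(ρ² − 4μ²ρ))/(2ρ), x_∓ = e^{t_∓}, so that 1 < x_− < x_+. The function g(x) := x²·(μ² + ρ(1 − log x)²) is strictly increasing on (0, x_−], strictly decreasing on [x_−, x_+], and strictly increasing on [x_+, ∞); its local maximum value is g(x_−) = ρ·x_−²·log x_+ and its local minimum value is g(x_+) = ρ·x_+²·log x_−, with 0 < g(x_+) < g(x_−). Consequently, for d > 0 the set {x > 0 : g(x) = d} has exactly three elements if and only if ρ·x_+²·log x_− < d < ρ·x_−²·log x_+, and exactly one element if 0 < d < ρ·x_+²·log x_− or d > ρ·x_−²·log x_+. -/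

import Mathlib

open Real Set Filter

set_option maxHeartbeats 2000000

/-- `g(x) = F(x,0) = x²(μ² + ρ(1 − log x)²)`, where `F` is the first integral of the
phase-plane system associated to the curvature energy `Θ_μ` in the 2-space form of
curvature `ρ`. -/
noncomputable def gfun (μ ρ x : ℝ) : ℝ :=
  x ^ 2 * (μ ^ 2 + ρ * (1 - Real.log x) ^ 2)

/-- For `ρ > 4μ² > 0`, with `t_∓ = (ρ ∓ √(ρ² − 4μ²ρ))/(2ρ)` and `x_∓ = e^{t_∓}` (so that
`1 < x₋ < x₊`), the function `g(x) = x²(μ² + ρ(1 − log x)²)` is strictly increasing on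
`(0, x₋]`, strictly decreasing on `[x₋, x₊]`, strictly increasing on `[x₊, ∞)`, with local
maximum `g(x₋) = ρx₋² log x₊` and local minimum `g(x₊) = ρx₊² log x₋`, and
`0 < g(x₊) < g(x₋)`. Consequently, for `d > 0` the set `{x > 0 : g(x) = d}` has exactly
three elements iff `ρx₊² log x₋ < d < ρx₋² log x₊`, and exactly one element if
`0 < d < ρx₊² log x₋` or `d > ρx₋² log x₊`. -/
theorem orbit_axis_cuts_sphere (μ ρ : ℝ) (hμ : 0 < 4 * μ ^ 2) (hρ : 4 * μ ^ 2 < ρ)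
    (tm tp xm xp : ℝ)
    (htm : tm = (ρ - Real.sqrt (ρ ^ 2 - 4 * μ ^ 2 * ρ)) / (2 * ρ))
    (htp : tp = (ρ + Real.sqrt (ρ ^ 2 - 4 * μ ^ 2 * ρ)) / (2 * ρ))
    (hxm : xm = Real.exp tm) (hxp : xp = Real.exp tp) :
    (1 < xm ∧ xm < xp) ∧
    StrictMonoOn (gfun μ ρ) (Set.Ioc 0 xm) ∧
    StrictAntiOn (gfun μ ρ) (Set.Icc xm xp) ∧
    StrictMonoOn (gfun μ ρ) (Set.Ici xp) ∧
    gfun μ ρ xm = ρ * xm ^ 2 * Real.log xp ∧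
    gfun μ ρ xp = ρ * xp ^ 2 * Real.log xm ∧
    (0 < gfun μ ρ xp ∧ gfun μ ρ xp < gfun μ ρ xm) ∧
    (∀ d : ℝ, 0 < d →
      (({x : ℝ | 0 < x ∧ gfun μ ρ x = d}.ncard = 3 ↔
          ρ * xp ^ 2 * Real.log xm < d ∧ d < ρ * xm ^ 2 * Real.log xp) ∧
        ((d < ρ * xp ^ 2 * Real.log xm ∨ ρ * xm ^ 2 * Real.log xp < d) →
          {x : ℝ | 0 < x ∧ gfun μ ρ x = d}.ncard = 1))) := by
  have hρ0 : 0 < ρ := lt_trans hμ hρ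
  have hμ0 : 0 < μ ^ 2 := by nlinarith
  have hD : 0 < ρ ^ 2 - 4 * μ ^ 2 * ρ := by nlinarith
  set s := Real.sqrt (ρ ^ 2 - 4 * μ ^ 2 * ρ) with hs_def
  have hs0 : 0 < s := Real.sqrt_pos.mpr hD
  have hs2 : s ^ 2 = ρ ^ 2 - 4 * μ ^ 2 * ρ := Real.sq_sqrt hD.le
  have hsρ : s < ρ := by nlinarith
  have htm0 : 0 < tm := by rw [htm]; apply div_pos (by linarith) (by linarith)
  have htmtp : tm < tp := by
    rw [htm, htp, div_lt_div_iff_of_pos_right (by linarith)]; linarith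
  have htp1 : tp < 1 := by rw [htp, div_lt_one (by linarith)]; linarith
  have hρ' : ρ ≠ 0 := hρ0.ne'
  have hsum : tm + tp = 1 := by rw [htm, htp]; field_simp; ring
  have hprod : ρ * (tm * tp) = μ ^ 2 := by
    have h4 : tm * tp = (ρ ^ 2 - s ^ 2) / (4 * ρ ^ 2) := by
      rw [htm, htp]; field_simp; ring
    rw [h4, hs2]; field_simp; ring
  have hquad : ∀ t : ℝ, ρ * t ^ 2 - ρ * t + μ ^ 2 = ρ * (t - tm) * (t - tp) := by
    intro t; linear_combination (ρ * t) * hsum - hprod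
  have hrootp : ρ * tp ^ 2 - ρ * tp + μ ^ 2 = 0 := by rw [hquad]; ring
  have hrootm : ρ * tm ^ 2 - ρ * tm + μ ^ 2 = 0 := by rw [hquad]; ring
  have hxm0 : 0 < xm := by rw [hxm]; exact Real.exp_pos _
  have hxp0 : 0 < xp := by rw [hxp]; exact Real.exp_pos _
  have hxm1 : 1 < xm := by
    rw [hxm, show (1:ℝ) = Real.exp 0 by simp]; exact Real.exp_lt_exp.mpr htm0
  have hxmxp : xm < xp := by rw [hxm, hxp]; exact Real.exp_lt_exp.mpr htmtp
  have hlogxm : Real.log xm = tm := by rw [hxm, Real.log_exp]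
  have hlogxp : Real.log xp = tp := by rw [hxp, Real.log_exp]
  -- derivative
  have hderiv : ∀ x : ℝ, 0 < x → HasDerivAt (gfun μ ρ)
      (2 * x * (ρ * (Real.log x) ^ 2 - ρ * Real.log x + μ ^ 2)) x := by
    intro x hx
    have hlog : HasDerivAt Real.log x⁻¹ x := Real.hasDerivAt_log hx.ne'
    have h1 : HasDerivAt (fun y => (1 - Real.log y) ^ 2)
        ((2 : ℕ) * (1 - Real.log x) ^ (2 - 1) * (0 - x⁻¹)) x :=
      ((hasDerivAt_const x (1:ℝ)).sub hlog).pow 2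
    have h2 : HasDerivAt (fun y => μ ^ 2 + ρ * (1 - Real.log y) ^ 2)
        (ρ * ((2 : ℕ) * (1 - Real.log x) ^ (2 - 1) * (0 - x⁻¹))) x :=
      (h1.const_mul ρ).const_add (μ ^ 2)
    have h3 := (hasDerivAt_pow 2 x).mul h2
    have : gfun μ ρ = fun y => y ^ 2 * (μ ^ 2 + ρ * (1 - Real.log y) ^ 2) := rfl
    rw [this]
    refine h3.congr_deriv ?_
    field_simp [hx.ne']
    ring
  have hcont : ContinuousOn (gfun μ ρ) (Set.Ioi 0) := fun x hx =>
    ((hderiv x hx).continuousAt).continuousWithinAt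
  -- monotonicity
  have hmono1 : StrictMonoOn (gfun μ ρ) (Set.Ioc 0 xm) := by
    apply strictMonoOn_of_deriv_pos (convex_Ioc 0 xm)
      (hcont.mono (by intro x hx; exact hx.1))
    intro x hx
    rw [interior_Ioc] at hx
    have hx0 : 0 < x := hx.1
    have hlt : Real.log x < tm := by
      rw [← hlogxm]; exact Real.log_lt_log hx0 hx.2
    rw [(hderiv x hx0).deriv]
    have h1 : 0 < ρ * (Real.log x - tm) * (Real.log x - tp) := by
      have h0 := mul_pos hρ0 (mul_pos_of_neg_of_neg
        (show Real.log x - tm < 0 by linarith)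
        (show Real.log x - tp < 0 by linarith))
      linarith [h0]
    rw [hquad]
    exact mul_pos (by linarith) h1
  have hanti : StrictAntiOn (gfun μ ρ) (Set.Icc xm xp) := by
    apply strictAntiOn_of_deriv_neg (convex_Icc xm xp)
      (hcont.mono (by intro x hx; exact lt_of_lt_of_le hxm0 hx.1))
    intro x hx
    rw [interior_Icc] at hx
    have hx0 : 0 < x := lt_trans hxm0 hx.1
    have hlt1 : tm < Real.log x := by rw [← hlogxm]; exact Real.log_lt_log hxm0 hx.1
    have hlt2 : Real.log x < tp := by rw [← hlogxp]; exact Real.log_lt_log hx0 hx.2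
    rw [(hderiv x hx0).deriv, hquad]
    have h1 : ρ * (Real.log x - tm) * (Real.log x - tp) < 0 := by
      apply mul_neg_of_pos_of_neg
      · exact mul_pos hρ0 (by linarith)
      · linarith
    have h2 := mul_neg_of_pos_of_neg (show (0:ℝ) < 2 * x by linarith) h1
    linarith
  have hmono3 : StrictMonoOn (gfun μ ρ) (Set.Ici xp) := by
    apply strictMonoOn_of_deriv_pos (convex_Ici xp)
      (hcont.mono (by intro x hx; exact lt_of_lt_of_le hxp0 hx))
    intro x hx
    rw [interior_Ici] at hx
    have hx0 : 0 < x := lt_trans hxp0 hx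
    have hlt : tp < Real.log x := by rw [← hlogxp]; exact Real.log_lt_log hxp0 hx
    rw [(hderiv x hx0).deriv, hquad]
    have h1 : 0 < ρ * (Real.log x - tm) * (Real.log x - tp) :=
      mul_pos (mul_pos hρ0 (by linarith)) (by linarith)
    exact mul_pos (by linarith) h1
  -- values at the critical points
  have hsum' : 1 - tm = tp := by linarith
  have hsum'' : 1 - tp = tm := by linarith
  have hgB : gfun μ ρ xm = ρ * xm ^ 2 * Real.log xp := by
    unfold gfun; rw [hlogxm, hlogxp, hsum']
    linear_combination xm ^ 2 * hrootp
  have hgA : gfun μ ρ xp = ρ * xp ^ 2 * Real.log xm := by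
    unfold gfun; rw [hlogxm, hlogxp, hsum'']
    linear_combination xp ^ 2 * hrootm
  set A := ρ * xp ^ 2 * Real.log xm with hA_def
  set B := ρ * xm ^ 2 * Real.log xp with hB_def
  have hA0 : 0 < A := by rw [hA_def, hlogxm]; positivity
  have hAB : A < B := by
    rw [← hgA, ← hgB]
    exact hanti (Set.left_mem_Icc.mpr hxmxp.le) (Set.right_mem_Icc.mpr hxmxp.le) hxmxp
  -- comparison helpers
  have hle1 : ∀ x ∈ Set.Ioc (0:ℝ) xm, gfun μ ρ x ≤ gfun μ ρ xm := by
    intro x hx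
    rcases hx.2.eq_or_lt with h | h
    · rw [h]
    · exact (hmono1 hx (Set.mem_Ioc.mpr ⟨by linarith, le_refl _⟩) h).le
  have hge2 : ∀ x ∈ Set.Icc xm xp, gfun μ ρ xp ≤ gfun μ ρ x := by
    intro x hx
    rcases hx.2.eq_or_lt with h | h
    · rw [h]
    · exact (hanti hx (Set.right_mem_Icc.mpr hxmxp.le) h).le
  have hle2 : ∀ x ∈ Set.Icc xm xp, gfun μ ρ x ≤ gfun μ ρ xm := by
    intro x hx
    rcases hx.1.eq_or_lt with h | h
    · rw [← h]
    · exact (hanti (Set.left_mem_Icc.mpr hxmxp.le) hx h).le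
  have hge3 : ∀ x ∈ Set.Ici xp, gfun μ ρ xp ≤ gfun μ ρ x := by
    intro x hx
    rcases (Set.mem_Ici.mp hx).eq_or_lt with h | h
    · rw [h]
    · exact (hmono3 (Set.self_mem_Ici) hx h).le
  -- tendsto 0 at 0⁺
  have hxid : Tendsto (fun x : ℝ => x) (nhdsWithin 0 (Set.Ioi 0)) (nhds 0) :=
    Filter.tendsto_id.mono_right nhdsWithin_le_nhds
  have hxlog : Tendsto (fun x : ℝ => Real.log x * x) (nhdsWithin 0 (Set.Ioi 0)) (nhds 0) := by
    have h := tendsto_log_mul_rpow_nhdsGT_zero (r := 1) zero_lt_one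
    simpa only [Real.rpow_one] using h
  have htend : Tendsto (gfun μ ρ) (nhdsWithin 0 (Set.Ioi 0)) (nhds 0) := by
    have h2 : Tendsto (fun x : ℝ => μ ^ 2 * x ^ 2 + ρ * (x - Real.log x * x) ^ 2)
        (nhdsWithin 0 (Set.Ioi 0)) (nhds (μ ^ 2 * 0 ^ 2 + ρ * ((0:ℝ) - 0) ^ 2)) := by
      exact (tendsto_const_nhds.mul (hxid.pow 2)).add
        (tendsto_const_nhds.mul ((hxid.sub hxlog).pow 2))
    simp only [sub_zero, mul_zero, zero_pow, add_zero, ne_eq, OfNat.ofNat_ne_zero,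
      not_false_eq_true, sub_self] at h2
    have h3 : Tendsto (fun x : ℝ => μ ^ 2 * x ^ 2 + ρ * (x - Real.log x * x) ^ 2)
        (nhdsWithin 0 (Set.Ioi 0)) (nhds 0) := by
      convert h2 using 2 <;> ring
    refine h3.congr' ?_
    filter_upwards [self_mem_nhdsWithin] with x hx
    unfold gfun; ring
  -- existence lemmas
  have hex1 : ∀ d : ℝ, 0 < d → d ≤ gfun μ ρ xm → ∃ a ∈ Set.Ioc (0:ℝ) xm, gfun μ ρ a = d := by
    intro d hd hdB
    have hev : ∀ᶠ x in nhdsWithin 0 (Set.Ioi (0:ℝ)),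
        gfun μ ρ x < d ∧ x ∈ Set.Ioo (0:ℝ) xm := by
      filter_upwards [htend.eventually_lt_const hd,
        Ioo_mem_nhdsGT_of_mem (Set.left_mem_Ico.mpr hxm0)] with x h1 h2
      exact ⟨h1, h2⟩
    obtain ⟨ε, hε⟩ := hev.exists
    have hεxm : ε ≤ xm := hε.2.2.le
    have hsub : Set.Icc ε xm ⊆ Set.Ioi 0 := fun y hy => lt_of_lt_of_le hε.2.1 hy.1
    have := intermediate_value_Icc hεxm (hcont.mono hsub)
    have hmem : d ∈ Set.Icc (gfun μ ρ ε) (gfun μ ρ xm) := ⟨hε.1.le, hdB⟩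
    obtain ⟨a, ha, hga⟩ := this hmem
    exact ⟨a, ⟨lt_of_lt_of_le hε.2.1 ha.1, ha.2⟩, hga⟩
  have hex2 : ∀ d : ℝ, gfun μ ρ xp ≤ d → d ≤ gfun μ ρ xm →
      ∃ b ∈ Set.Icc xm xp, gfun μ ρ b = d := by
    intro d h1 h2
    have hsub : Set.Icc xm xp ⊆ Set.Ioi 0 := fun y hy => lt_of_lt_of_le hxm0 hy.1
    obtain ⟨b, hb, hgb⟩ := intermediate_value_Icc' hxmxp.le (hcont.mono hsub) ⟨h1, h2⟩
    exact ⟨b, hb, hgb⟩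
  have hex3 : ∀ d : ℝ, gfun μ ρ xp ≤ d → ∃ c ∈ Set.Ici xp, gfun μ ρ c = d := by
    intro d hd
    set M := Real.sqrt (d / μ ^ 2) + xp with hM_def
    have hq0 : 0 ≤ Real.sqrt (d / μ ^ 2) := Real.sqrt_nonneg _
    have hq2 : Real.sqrt (d / μ ^ 2) ^ 2 = d / μ ^ 2 := by
      apply Real.sq_sqrt
      have : 0 < d := lt_of_lt_of_le (by rw [hgA]; exact hA0) hd
      exact div_nonneg this.le (sq_nonneg μ)
    have hMxp : xp ≤ M := by rw [hM_def]; linarith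
    have hM0 : 0 < M := lt_of_lt_of_le hxp0 hMxp
    have hdM : d < gfun μ ρ M := by
      have h1 : μ ^ 2 * M ^ 2 ≤ gfun μ ρ M := by
        unfold gfun
        have h0 := mul_nonneg hρ0.le
          (mul_nonneg (sq_nonneg M) (sq_nonneg (1 - Real.log M)))
        linarith [h0]
      have h2 : d < μ ^ 2 * M ^ 2 := by
        have hd2 : μ ^ 2 * Real.sqrt (d / μ ^ 2) ^ 2 = d := by
          rw [hq2]; exact mul_div_cancel₀ d hμ0.ne'
        have hexp : μ ^ 2 * M ^ 2 =
            d + μ ^ 2 * (2 * Real.sqrt (d / μ ^ 2) * xp + xp ^ 2) := by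
          rw [hM_def]; linear_combination hd2
        have hpos : 0 < μ ^ 2 * (2 * Real.sqrt (d / μ ^ 2) * xp + xp ^ 2) := by
          apply mul_pos hμ0
          linarith [mul_nonneg hq0 hxp0.le, mul_pos hxp0 hxp0]
        rw [hexp]
        linarith
      linarith
    have hsub : Set.Icc xp M ⊆ Set.Ioi 0 := fun y hy => lt_of_lt_of_le hxp0 hy.1
    obtain ⟨c, hc, hgc⟩ := intermediate_value_Icc hMxp (hcont.mono hsub) ⟨hd, hdM.le⟩
    exact ⟨c, hc.1, hgc⟩
  -- cover
  have hcover : ∀ x : ℝ, 0 < x →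
      x ∈ Set.Ioc (0:ℝ) xm ∨ x ∈ Set.Icc xm xp ∨ x ∈ Set.Ici xp := by
    intro x hx
    rcases le_total x xm with h | h
    · exact Or.inl ⟨hx, h⟩
    · rcases le_total x xp with h' | h'
      · exact Or.inr (Or.inl ⟨h, h'⟩)
      · exact Or.inr (Or.inr h')
  have hxm_mem1 : xm ∈ Set.Ioc (0:ℝ) xm := ⟨hxm0, le_refl _⟩
  have hxm_mem2 : xm ∈ Set.Icc xm xp := Set.left_mem_Icc.mpr hxmxp.le
  have hxp_mem2 : xp ∈ Set.Icc xm xp := Set.right_mem_Icc.mpr hxmxp.le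
  have hxp_mem3 : xp ∈ Set.Ici xp := Set.self_mem_Ici
  -- cardinality classification
  have hcase3 : ∀ d : ℝ, A < d → d < B → {x : ℝ | 0 < x ∧ gfun μ ρ x = d}.ncard = 3 := by
    intro d hdA hdB
    have hd0 : 0 < d := lt_trans hA0 hdA
    obtain ⟨a, ha, hga⟩ := hex1 d hd0 (by rw [hgB]; exact hdB.le)
    obtain ⟨b, hb, hgb⟩ := hex2 d (by rw [hgA]; exact hdA.le) (by rw [hgB]; exact hdB.le)
    obtain ⟨c, hc, hgc⟩ := hex3 d (by rw [hgA]; exact hdA.le)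
    have haxm : a < xm := by
      rcases ha.2.eq_or_lt with h | h
      · exfalso; rw [h, hgB] at hga; linarith
      · exact h
    have hbxm : xm < b := by
      rcases hb.1.eq_or_lt with h | h
      · exfalso; rw [← h, hgB] at hgb; linarith
      · exact h
    have hbxp : b < xp := by
      rcases hb.2.eq_or_lt with h | h
      · exfalso; rw [h, hgA] at hgb; linarith
      · exact h
    have hcxp : xp < c := by
      rcases (Set.mem_Ici.mp hc).eq_or_lt with h | h
      · exfalso; rw [← h, hgA] at hgc; linarith
      · exact h
    have hseteq : {x : ℝ | 0 < x ∧ gfun μ ρ x = d} = {a, b, c} := by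
      ext x
      constructor
      · rintro ⟨hx0, hgx⟩
        rcases hcover x hx0 with h | h | h
        · exact Or.inl (hmono1.injOn h ha (by rw [hgx, hga]))
        · exact Or.inr (Or.inl (hanti.injOn h hb (by rw [hgx, hgb])))
        · exact Or.inr (Or.inr (hmono3.injOn h hc (by rw [hgx, hgc])))
      · rintro (rfl | rfl | rfl)
        · exact ⟨ha.1, hga⟩
        · exact ⟨lt_trans hxm0 hbxm, hgb⟩
        · exact ⟨lt_trans hxp0 hcxp, hgc⟩
    rw [hseteq]
    rw [Set.ncard_eq_three]
    exact ⟨a, b, c, by linarith, by linarith, by linarith, rfl⟩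
  have hcase_lo : ∀ d : ℝ, 0 < d → d < A → {x : ℝ | 0 < x ∧ gfun μ ρ x = d}.ncard = 1 := by
    intro d hd0 hdA
    obtain ⟨a, ha, hga⟩ := hex1 d hd0 (by rw [hgB]; linarith)
    have hseteq : {x : ℝ | 0 < x ∧ gfun μ ρ x = d} = {a} := by
      ext x
      constructor
      · rintro ⟨hx0, hgx⟩
        rcases hcover x hx0 with h | h | h
        · exact hmono1.injOn h ha (by rw [hgx, hga])
        · exfalso; have := hge2 x h; rw [hgx, hgA] at this; linarith
        · exfalso; have := hge3 x h; rw [hgx, hgA] at this; linarith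
      · rintro rfl; exact ⟨ha.1, hga⟩
    rw [hseteq, Set.ncard_singleton]
  have hcase_hi : ∀ d : ℝ, B < d → {x : ℝ | 0 < x ∧ gfun μ ρ x = d}.ncard = 1 := by
    intro d hdB
    obtain ⟨c, hc, hgc⟩ := hex3 d (by rw [hgA]; linarith)
    have hseteq : {x : ℝ | 0 < x ∧ gfun μ ρ x = d} = {c} := by
      ext x
      constructor
      · rintro ⟨hx0, hgx⟩
        rcases hcover x hx0 with h | h | h
        · exfalso; have := hle1 x h; rw [hgx, hgB] at this; linarith
        · exfalso; have := hle2 x h; rw [hgx, hgB] at this; linarith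
        · exact hmono3.injOn h hc (by rw [hgx, hgc])
      · rintro rfl; exact ⟨lt_of_lt_of_le hxp0 hc, hgc⟩
    rw [hseteq, Set.ncard_singleton]
  have hcase_eqA : {x : ℝ | 0 < x ∧ gfun μ ρ x = A}.ncard = 2 := by
    obtain ⟨a, ha, hga⟩ := hex1 A hA0 (by rw [hgB]; linarith)
    have haxm : a < xm := by
      rcases ha.2.eq_or_lt with h | h
      · exfalso; rw [h, hgB] at hga; linarith
      · exact h
    have hseteq : {x : ℝ | 0 < x ∧ gfun μ ρ x = A} = {a, xp} := by
      ext x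
      constructor
      · rintro ⟨hx0, hgx⟩
        rcases hcover x hx0 with h | h | h
        · exact Or.inl (hmono1.injOn h ha (by rw [hgx, hga]))
        · exact Or.inr (hanti.injOn h hxp_mem2 (by rw [hgx, hgA]))
        · exact Or.inr (hmono3.injOn h hxp_mem3 (by rw [hgx, hgA]))
      · rintro (rfl | rfl)
        · exact ⟨ha.1, hga⟩
        · exact ⟨hxp0, hgA⟩
    rw [hseteq, Set.ncard_pair (by linarith : a ≠ xp)]
  have hcase_eqB : {x : ℝ | 0 < x ∧ gfun μ ρ x = B}.ncard = 2 := by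
    obtain ⟨c, hc, hgc⟩ := hex3 B (by rw [hgA]; linarith)
    have hcxp : xp < c := by
      rcases (Set.mem_Ici.mp hc).eq_or_lt with h | h
      · exfalso; rw [← h, hgA] at hgc; linarith
      · exact h
    have hseteq : {x : ℝ | 0 < x ∧ gfun μ ρ x = B} = {xm, c} := by
      ext x
      constructor
      · rintro ⟨hx0, hgx⟩
        rcases hcover x hx0 with h | h | h
        · exact Or.inl (hmono1.injOn h hxm_mem1 (by rw [hgx, hgB]))
        · exact Or.inl (hanti.injOn h hxm_mem2 (by rw [hgx, hgB]))
        · exact Or.inr (hmono3.injOn h hc (by rw [hgx, hgc]))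
      · rintro (rfl | rfl)
        · exact ⟨hxm0, hgB⟩
        · exact ⟨lt_trans hxp0 hcxp, hgc⟩
    rw [hseteq, Set.ncard_pair (by linarith : xm ≠ c)]
  refine ⟨⟨hxm1, hxmxp⟩, hmono1, hanti, hmono3, hgB, hgA, ⟨by rw [hgA]; exact hA0,
    by rw [hgA, hgB]; exact hAB⟩, ?_⟩
  intro d hd0
  constructor
  · constructor
    · intro h3
      by_contra hcon
      push_neg at hcon
      rcases lt_trichotomy d A with h | h | h
      · rw [hcase_lo d hd0 h] at h3; norm_num at h3
      · rw [h, hcase_eqA] at h3; norm_num at h3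
      · rcases lt_trichotomy d B with h' | h' | h'
        · linarith [hcon h]
        · rw [h', hcase_eqB] at h3; norm_num at h3
        · rw [hcase_hi d h'] at h3; norm_num at h3
    · rintro ⟨h1, h2⟩
      exact hcase3 d h1 h2
  · rintro (h | h)
    · exact hcase_lo d hd0 h
    · exact hcase_hi d h
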